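/- For the mass-spring-damper system with state matrix A = [[0,1,0,0],[−2k/M, −2d/M, k/M, d/M],[0,0,0,1],[k/m, d/m, −2k/m, −2d/m]] with M, m, k, d > 0, all eigenvalues of A have strictly negative real part. -/

import Mathlib

open Matrix Complex

private lemma quad_root_re_neg (a b c : ℝ) (ha : 0 < a) (hb : 0 < b) (hc : 0 < c)
    (lam : ℂ) (h : (a:ℂ) * lam^2 + (b:ℂ) * lam + (c:ℂ) = 0) : lam.re < 0 := by
  rw [Complex.ext_iff] at h
  obtain ⟨h1, h2⟩ := h
  simp [Complex.add_re, Complex.add_im, Complex.mul_re, Complex.mul_im, pow_two] at h1 h2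
  rcases eq_or_ne lam.im 0 with hq0 | hq0
  · rw [hq0] at h1
    by_contra hcon
    push_neg at hcon
    nlinarith [sq_nonneg lam.re, mul_nonneg (mul_nonneg ha.le hcon) hcon]
  · have h2' : lam.im * (2 * a * lam.re + b) = 0 := by linarith [h2]
    have : 2 * a * lam.re + b = 0 := by
      rcases mul_eq_zero.mp h2' with h | h
      · exact absurd h hq0
      · exact h
    nlinarith

/-- The mass-spring-damper state matrix (two masses `M, m`, spring constant `k`,
damping `d`, all positive) has all eigenvalues with strictly negative real part. -/
theorem mass_spring_damper_stable (M m k d : ℝ)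
    (hM : 0 < M) (hm : 0 < m) (hk : 0 < k) (hd : 0 < d) :
    let A : Matrix (Fin 4) (Fin 4) ℝ :=
      !![0, 1, 0, 0;
         -2*k/M, -2*d/M, k/M, d/M;
         0, 0, 0, 1;
         k/m, d/m, -2*k/m, -2*d/m]
    ∀ lam ∈ spectrum ℂ (A.map (algebraMap ℝ ℂ)), lam.re < 0 := by
  intro A lam hlam
  set B := A.map (algebraMap ℝ ℂ) with hB
  have hspec : lam ∈ spectrum ℂ (Matrix.toLinAlgEquiv' B) := by
    rwa [AlgEquiv.spectrum_eq]
  have hev : Module.End.HasEigenvalue (Matrix.toLinAlgEquiv' B) lam :=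
    Module.End.hasEigenvalue_iff_mem_spectrum.mpr hspec
  obtain ⟨v, hv⟩ := hev.exists_hasEigenvector
  have happ : B.mulVec v = lam • v := by
    have := hv.apply_eq_smul
    rwa [Matrix.toLinAlgEquiv'_apply] at this
  have hvne : v ≠ 0 := hv.right
  have e0 := congrFun happ 0
  have e1 := congrFun happ 1
  have e2 := congrFun happ 2
  have e3 := congrFun happ 3
  simp [hB, Matrix.mulVec, dotProduct, Fin.sum_univ_four, Matrix.map_apply,
    A, Complex.ofReal_div, Complex.ofReal_mul, Complex.ofReal_neg, Complex.ofReal_ofNat,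
    Pi.smul_apply, smul_eq_mul] at e0 e1 e2 e3
  set u := v 0 with hu
  set w := v 2 with hw
  have huw : u ≠ 0 ∨ w ≠ 0 := by
    by_contra hcon
    push_neg at hcon
    obtain ⟨h1, h2⟩ := hcon
    apply hvne
    funext i
    fin_cases i
    · exact h1
    · show v 1 = 0
      rw [e0, h1, mul_zero]
    · exact h2
    · show v 3 = 0
      rw [e2, h2, mul_zero]
  have hM0 : (M:ℂ) ≠ 0 := Complex.ofReal_ne_zero.mpr hM.ne'
  have hm0 : (m:ℂ) ≠ 0 := Complex.ofReal_ne_zero.mpr hm.ne'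
  rw [e0, e2] at e1 e3
  have E1 : (M:ℂ) * lam^2 * u + 2*d*lam*u - d*lam*w + 2*k*u - k*w = 0 := by
    field_simp at e1
    have h3 : ((M:ℂ))^3 * (-(2*k*u) - 2*d*lam*u + k*w + d*lam*w)
        = ((M:ℂ))^3 * ((M:ℂ)*lam^2*u) := by linear_combination ((M:ℂ))^3 * e1
    have := mul_left_cancel₀ (pow_ne_zero 3 hM0) h3
    linear_combination -this
  have E2 : (m:ℂ) * lam^2 * w - d*lam*u + 2*d*lam*w - k*u + 2*k*w = 0 := by
    field_simp at e3
    linear_combination -e3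
  set a : ℝ := M * Complex.normSq u + m * Complex.normSq w with ha
  set c : ℝ := Complex.normSq u + Complex.normSq w + Complex.normSq (u - w) with hc
  have cu : u * (starRingEnd ℂ) u = (Complex.normSq u : ℂ) := Complex.mul_conj u
  have cw : w * (starRingEnd ℂ) w = (Complex.normSq w : ℂ) := Complex.mul_conj w
  have cuw : (u - w) * ((starRingEnd ℂ) u - (starRingEnd ℂ) w)
      = (Complex.normSq (u - w) : ℂ) := by
    rw [← map_sub]; exact Complex.mul_conj (u - w)
  have key : (a:ℂ) * lam^2 + ((d*c : ℝ):ℂ) * lam + ((k*c : ℝ):ℂ) = 0 := by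
    rw [ha, hc]
    push_cast
    linear_combination ((starRingEnd ℂ) u) * E1 + ((starRingEnd ℂ) w) * E2
      - (lam^2 * (M:ℂ) + (d:ℂ)*lam + (k:ℂ)) * cu
      - (lam^2 * (m:ℂ) + (d:ℂ)*lam + (k:ℂ)) * cw
      - ((d:ℂ)*lam + (k:ℂ)) * cuw
  have hane : 0 < a := by
    rcases huw with h | h
    · have : 0 < Complex.normSq u := Complex.normSq_pos.mpr h
      nlinarith [Complex.normSq_nonneg w]
    · have : 0 < Complex.normSq w := Complex.normSq_pos.mpr h
      nlinarith [Complex.normSq_nonneg u]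
  have hcne : 0 < c := by
    rcases huw with h | h
    · have : 0 < Complex.normSq u := Complex.normSq_pos.mpr h
      nlinarith [Complex.normSq_nonneg w, Complex.normSq_nonneg (u - w)]
    · have : 0 < Complex.normSq w := Complex.normSq_pos.mpr h
      nlinarith [Complex.normSq_nonneg u, Complex.normSq_nonneg (u - w)]
  exact quad_root_re_neg a (d*c) (k*c) hane (mul_pos hd hcne) (mul_pos hk hcne) lam key
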